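/- Let r ≥ 1 and let A = (a_{i,j}) be an r×r symmetrisable indecomposable generalised Cartan matrix of finite type. Let L be the r×r lower unitriangular matrix with L_{i,i} = 1, L_{i,j} = a_{i,j} for i > j and L_{i,j} = 0 for i < j, and let U be the r×r upper unitriangular matrix with U_{i,i} = 1, U_{i,j} = a_{i,j} for i < j and U_{i,j} = 0 for i > j. Set C = (−L·U^{−1})^T, a matrix with rational entries. Then there exists a positive integer h such that I + C + C² + ⋯ + C^{h−1} = 0 (in particular C^h = I). -/

import Mathlib

open Matrix

/-- An r×r generalised Cartan matrix. -/
def IsGCM {r : ℕ} (A : Matrix (Fin r) (Fin r) ℤ) : Prop :=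
  (∀ i, A i i = 2) ∧ ∀ i j, i ≠ j → A i j ≤ 0 ∧ (A i j = 0 ↔ A j i = 0)

/-- `A` is symmetrisable: there exist positive integers `d i` with `d i * A i j = d j * A j i`. -/
def IsSymmetrisable {r : ℕ} (A : Matrix (Fin r) (Fin r) ℤ) : Prop :=
  ∃ d : Fin r → ℤ, (∀ i, 0 < d i) ∧ ∀ i j, d i * A i j = d j * A j i

/-- `A` is of finite type: every principal minor is positive. -/
def IsFiniteType {r : ℕ} (A : Matrix (Fin r) (Fin r) ℤ) : Prop :=
  ∀ I : Finset (Fin r), I.Nonempty →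
    0 < (A.submatrix ((↑) : I → Fin r) ((↑) : I → Fin r)).det

/-- `A` is indecomposable. -/
def IsIndecomposable {r : ℕ} (A : Matrix (Fin r) (Fin r) ℤ) : Prop :=
  ¬ ∃ I : Finset (Fin r), I.Nonempty ∧ I ≠ Finset.univ ∧
      ∀ i ∈ I, ∀ j, j ∉ I → A i j = 0


/-- Symmetric dot product identity. -/
lemma symm_dot {n : ℕ} {S : Matrix (Fin n) (Fin n) ℚ} (hS : Sᵀ = S)
    (u v : Fin n → ℚ) : u ⬝ᵥ (S *ᵥ v) = v ⬝ᵥ (S *ᵥ u) := by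
  rw [Matrix.dotProduct_mulVec, ← Matrix.mulVec_transpose, hS, dotProduct_comm]

/-- Sylvester's criterion (with all principal minors) over ℚ. -/
lemma posdef_of_minors : ∀ (n : ℕ) (S : Matrix (Fin n) (Fin n) ℚ), Sᵀ = S →
    (∀ I : Finset (Fin n), I.Nonempty →
      0 < (S.submatrix ((↑) : I → Fin n) ((↑) : I → Fin n)).det) →
    ∀ x : Fin n → ℚ, x ≠ 0 → 0 < x ⬝ᵥ (S *ᵥ x) := by
  intro n
  induction n with
  | zero => intro S _ _ x hx; exact absurd (funext fun i => i.elim0) hx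
  | succ n ih =>
    intro S hS hmin x hx
    set S' : Matrix (Fin n) (Fin n) ℚ := S.submatrix Fin.castSucc Fin.castSucc with hS'def
    have hS'symm : S'ᵀ = S' := by
      ext i j
      have := congrFun (congrFun hS (Fin.castSucc j)) (Fin.castSucc i)
      simpa [hS'def] using this.symm
    have hmin' : ∀ I : Finset (Fin n), I.Nonempty →
        0 < (S'.submatrix ((↑) : I → Fin n) ((↑) : I → Fin n)).det := by
      intro I hI
      set J : Finset (Fin (n+1)) := I.map ⟨Fin.castSucc, Fin.castSucc_injective n⟩ with hJ
      have hJne : J.Nonempty := hI.map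
      have hmem : ∀ j : Fin (n+1), j ∈ J → ∃ i : Fin n, i ∈ I ∧ Fin.castSucc i = j := by
        intro j hj
        obtain ⟨i, hi, hij⟩ := Finset.mem_map.1 hj
        exact ⟨i, hi, hij⟩
      have hlt : ∀ j : Fin (n+1), j ∈ J → (j : ℕ) < n := by
        intro j hj; obtain ⟨i, hi, hij⟩ := hmem j hj; rw [← hij]; exact i.isLt
      let e : {x // x ∈ I} ≃ {x // x ∈ J} :=
        { toFun := fun i => ⟨Fin.castSucc i.1, Finset.mem_map_of_mem _ i.2⟩
          invFun := fun j => ⟨Fin.castLT j.1 (hlt j.1 j.2), by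
              obtain ⟨i, hi, hij⟩ := hmem j.1 j.2
              have : Fin.castLT j.1 (hlt j.1 j.2) = i := by
                apply Fin.ext; simp [← hij]
              rw [this]; exact hi⟩
          left_inv := fun i => by apply Subtype.ext; apply Fin.ext; simp
          right_inv := fun j => by apply Subtype.ext; apply Fin.ext; simp }
      have key : S'.submatrix ((↑) : I → Fin n) ((↑) : I → Fin n) =
          (S.submatrix ((↑) : J → Fin (n+1)) ((↑) : J → Fin (n+1))).submatrix e e := by
        ext i j
        show S (Fin.castSucc i.1) (Fin.castSucc j.1) = S (e i).1 (e j).1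
        rfl
      rw [key, Matrix.det_submatrix_equiv_self]
      exact hmin J hJne
    have hS'pos : ∀ z : Fin n → ℚ, z ≠ 0 → 0 < z ⬝ᵥ (S' *ᵥ z) := ih S' hS'symm hmin'
    have hS'nonneg : ∀ z : Fin n → ℚ, 0 ≤ z ⬝ᵥ (S' *ᵥ z) := by
      intro z
      by_cases hz : z = 0
      · simp [hz]
      · exact (hS'pos z hz).le
    have hdetuniv : ∀ (m : ℕ) (M : Matrix (Fin m) (Fin m) ℚ),
        (M.submatrix (Subtype.val : {x // x ∈ (Finset.univ : Finset (Fin m))} → Fin m)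
          Subtype.val).det = M.det := by
      intro m M
      let e : {x // x ∈ (Finset.univ : Finset (Fin m))} ≃ Fin m :=
        Equiv.subtypeUnivEquiv (fun x => Finset.mem_univ x)
      have h : M.submatrix (Subtype.val : {x // x ∈ (Finset.univ : Finset (Fin m))} → Fin m)
          Subtype.val = (M.submatrix id id).submatrix e e := rfl
      rw [h, Matrix.det_submatrix_equiv_self]
      simp
    have hdetS' : 0 < S'.det := by
      rcases Nat.eq_zero_or_pos n with h0 | h0
      · subst h0; simp [Matrix.det_fin_zero]
      · have hne : Nonempty (Fin n) := ⟨⟨0, h0⟩⟩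
        have := hmin' Finset.univ Finset.univ_nonempty
        rwa [hdetuniv n S'] at this
    have hdetS : 0 < S.det := by
      have hne : Nonempty (Fin (n+1)) := ⟨0⟩
      have := hmin Finset.univ Finset.univ_nonempty
      rwa [hdetuniv (n+1) S] at this
    -- blocks
    set b : Fin n → ℚ := fun i => S (Fin.castSucc i) (Fin.last n) with hb
    set dd : ℚ := S (Fin.last n) (Fin.last n) with hdd
    have hbrow : ∀ j : Fin n, S (Fin.last n) (Fin.castSucc j) = b j := by
      intro j
      have := congrFun (congrFun hS (Fin.castSucc j)) (Fin.last n)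
      simpa [hb] using this
    haveI hinvS' : Invertible S' := S'.invertibleOfIsUnitDet (isUnit_iff_ne_zero.2 hdetS'.ne')
    set w : Fin n → ℚ := ⅟S' *ᵥ b with hw
    have hS'w : S' *ᵥ w = b := by
      rw [hw, Matrix.mulVec_mulVec, mul_invOf_self, Matrix.one_mulVec]
    -- Schur complement positivity via determinant
    have hequiv1 : ∀ i : Fin n, finSumFinEquiv (Sum.inl i) = Fin.castSucc i := by
      intro i; apply Fin.ext; simp [finSumFinEquiv]
    have hequiv2 : ∀ i : Fin 1, finSumFinEquiv (Sum.inr i : Fin n ⊕ Fin 1) = Fin.last n := by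
      intro i; apply Fin.ext; simp [finSumFinEquiv, Fin.last]
    have hblock : S.submatrix finSumFinEquiv finSumFinEquiv =
        Matrix.fromBlocks S' (Matrix.of fun i (_ : Fin 1) => b i)
          (Matrix.of fun (_ : Fin 1) j => b j) (Matrix.of fun (_ : Fin 1) (_ : Fin 1) => dd) := by
      ext i j
      rcases i with i | i <;> rcases j with j | j
      · rw [Matrix.submatrix_apply, hequiv1, hequiv1]; rfl
      · rw [Matrix.submatrix_apply, hequiv1, hequiv2]; rfl
      · rw [Matrix.submatrix_apply, hequiv2, hequiv1]
        show S (Fin.last n) (Fin.castSucc j) = b j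
        exact hbrow j
      · rw [Matrix.submatrix_apply, hequiv2, hequiv2]; rfl
    have hdeteq : S.det = S'.det * (dd - b ⬝ᵥ w) := by
      have h1 : S.det = (S.submatrix finSumFinEquiv finSumFinEquiv).det :=
        (Matrix.det_submatrix_equiv_self _ _).symm
      rw [h1, hblock, Matrix.det_fromBlocks₁₁]
      congr 1
      rw [Matrix.det_fin_one]
      simp only [Matrix.sub_apply, Matrix.of_apply]
      congr 1
      rw [Matrix.mul_apply]
      simp only [Matrix.mul_apply, Matrix.of_apply]
      rw [dotProduct, hw]
      simp only [Matrix.mulVec, dotProduct, Finset.sum_mul, Finset.mul_sum]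
      rw [Finset.sum_comm]
      refine Finset.sum_congr rfl fun k _ => Finset.sum_congr rfl fun l _ => by ring
    have hschur : 0 < dd - b ⬝ᵥ w := by
      have h2 : 0 < S'.det * (dd - b ⬝ᵥ w) := hdeteq ▸ hdetS
      rcases mul_pos_iff.1 h2 with ⟨_, h⟩ | ⟨h, _⟩
      · exact h
      · exact absurd hdetS' (not_lt.2 h.le)
    -- completion of the square
    set x' : Fin n → ℚ := fun i => x (Fin.castSucc i) with hx'
    set t : ℚ := x (Fin.last n) with ht
    have hbdef : ∀ i : Fin n, S (Fin.castSucc i) (Fin.last n) = b i := fun _ => rfl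
    have hS'apply : ∀ i j : Fin n, S (Fin.castSucc i) (Fin.castSucc j) = S' i j := fun _ _ => rfl
    have hx'apply : ∀ i : Fin n, x (Fin.castSucc i) = x' i := fun _ => rfl
    have hsplit : x ⬝ᵥ (S *ᵥ x) =
        x' ⬝ᵥ (S' *ᵥ x') + 2 * t * (b ⬝ᵥ x') + dd * t ^ 2 := by
      simp only [dotProduct, Matrix.mulVec, Fin.sum_univ_castSucc]
      simp only [hbrow, hbdef, hS'apply, hx'apply, ← ht, ← hdd]
      simp only [mul_add, add_mul, Finset.sum_add_distrib, Finset.mul_sum, Finset.sum_mul]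
      ring_nf
      rw [add_assoc, ← Finset.sum_add_distrib]
      exact congrArg _ (Finset.sum_congr rfl fun i _ => by ring)
    set z : Fin n → ℚ := x' + t • w with hz
    have hcross : w ⬝ᵥ (S' *ᵥ x') = b ⬝ᵥ x' := by
      rw [symm_dot hS'symm, hS'w, dotProduct_comm]
    have hzval : z ⬝ᵥ (S' *ᵥ z) =
        x' ⬝ᵥ (S' *ᵥ x') + 2 * t * (b ⬝ᵥ x') + (b ⬝ᵥ w) * t ^ 2 := by
      rw [hz, Matrix.mulVec_add, Matrix.mulVec_smul, hS'w]
      simp only [dotProduct_add, add_dotProduct, dotProduct_smul, smul_dotProduct,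
        smul_eq_mul, hcross]
      rw [dotProduct_comm x' b, dotProduct_comm w b]
      ring
    have hfinal : x ⬝ᵥ (S *ᵥ x) = z ⬝ᵥ (S' *ᵥ z) + (dd - b ⬝ᵥ w) * t ^ 2 := by
      rw [hsplit, hzval]; ring
    by_cases htz : t = 0
    · have hx'ne : x' ≠ 0 := by
        intro h0
        apply hx
        funext i
        refine Fin.lastCases ?_ ?_ i
        · exact htz
        · intro i; exact congrFun h0 i
      have hzx : z = x' := by rw [hz, htz]; simp
      rw [hfinal, hzx, htz]
      simpa using hS'pos x' hx'ne
    · have h1 : 0 ≤ z ⬝ᵥ (S' *ᵥ z) := hS'nonneg z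
      have h2 : 0 < (dd - b ⬝ᵥ w) * t ^ 2 :=
        mul_pos hschur (by positivity)
      rw [hfinal]
      linarith

/-- Determinant of the `univ`-submatrix. -/
lemma det_submatrix_univ {R : Type*} [CommRing R] {m : ℕ} (M : Matrix (Fin m) (Fin m) R) :
    (M.submatrix (Subtype.val : {x // x ∈ (Finset.univ : Finset (Fin m))} → Fin m)
      Subtype.val).det = M.det := by
  let e : {x // x ∈ (Finset.univ : Finset (Fin m))} ≃ Fin m :=
    Equiv.subtypeUnivEquiv (fun x => Finset.mem_univ x)
  have h : M.submatrix (Subtype.val : {x // x ∈ (Finset.univ : Finset (Fin m))} → Fin m)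
      Subtype.val = (M.submatrix id id).submatrix e e := rfl
  rw [h, Matrix.det_submatrix_equiv_self]
  simp

/-- Cauchy–Schwarz for a nonnegative symmetric bilinear form given by a matrix over ℚ. -/
lemma cs_ineq {n : ℕ} {S : Matrix (Fin n) (Fin n) ℚ} (hS : Sᵀ = S)
    (hnn : ∀ x : Fin n → ℚ, 0 ≤ x ⬝ᵥ (S *ᵥ x)) (u y : Fin n → ℚ) :
    (u ⬝ᵥ (S *ᵥ y)) ^ 2 ≤ (u ⬝ᵥ (S *ᵥ u)) * (y ⬝ᵥ (S *ᵥ y)) := by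
  have key : ∀ t : ℚ, 0 ≤ u ⬝ᵥ (S *ᵥ u) + 2 * t * (u ⬝ᵥ (S *ᵥ y))
      + t ^ 2 * (y ⬝ᵥ (S *ᵥ y)) := by
    intro t
    have h := hnn (u + t • y)
    rw [Matrix.mulVec_add, Matrix.mulVec_smul] at h
    simp only [dotProduct_add, add_dotProduct, dotProduct_smul, smul_dotProduct,
      smul_eq_mul] at h
    have hsym : y ⬝ᵥ (S *ᵥ u) = u ⬝ᵥ (S *ᵥ y) := symm_dot hS y u
    rw [hsym] at h
    nlinarith [h]
  set a := u ⬝ᵥ (S *ᵥ u) with ha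
  set bb := y ⬝ᵥ (S *ᵥ y) with hbb
  set c := u ⬝ᵥ (S *ᵥ y) with hc
  by_cases hy : bb = 0
  · have h0 : c = 0 := by
      by_contra hne
      have hh := key (-(a + 1) / (2 * c))
      rw [hy, mul_zero, add_zero] at hh
      have he : 2 * (-(a + 1) / (2 * c)) * c = -(a + 1) := by
        field_simp
      rw [he] at hh
      linarith
    rw [h0, hy]
    simp
  · have hypos : 0 < bb := lt_of_le_of_ne (hnn y) (Ne.symm hy)
    have hh := key (-c / bb)
    have e1 : a + 2 * (-c / bb) * c + (-c / bb) ^ 2 * bb = a - c ^ 2 / bb := by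
      field_simp
      ring
    rw [e1] at hh
    have h2 : c ^ 2 / bb ≤ a := by linarith
    calc c ^ 2 = c ^ 2 / bb * bb := by field_simp
      _ ≤ a * bb := mul_le_mul_of_nonneg_right h2 hypos.le

/-- Integers with squares bounded by a rational form a finite set. -/
lemma sq_bound_finite (q : ℚ) : {m : ℤ | (m : ℚ) ^ 2 ≤ q}.Finite := by
  apply Set.Finite.subset (Set.finite_Icc (-⌈max 1 q⌉) ⌈max 1 q⌉)
  intro m hm
  simp only [Set.mem_setOf_eq] at hm
  have h1 : |(m : ℚ)| ≤ max 1 q := by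
    rcases le_or_gt (|(m : ℚ)|) 1 with h | h
    · exact h.trans (le_max_left _ _)
    · have h2 : |(m : ℚ)| ≤ |(m : ℚ)| ^ 2 := by nlinarith [abs_nonneg (m : ℚ)]
      rw [sq_abs] at h2
      exact (h2.trans hm).trans (le_max_right _ _)
  have h2 : |(m : ℚ)| ≤ ((⌈max 1 q⌉ : ℤ) : ℚ) := h1.trans (Int.le_ceil _)
  rw [← Int.cast_abs, Int.cast_le] at h2
  simpa [Set.mem_Icc] using abs_le.1 h2

lemma mulVec_dot {n : ℕ} (M : Matrix (Fin n) (Fin n) ℚ) (s w : Fin n → ℚ) :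
    (M *ᵥ s) ⬝ᵥ w = s ⬝ᵥ (Mᵀ *ᵥ w) := by
  rw [dotProduct_comm, Matrix.dotProduct_mulVec, ← Matrix.mulVec_transpose, dotProduct_comm]

/-- The matrix of the Coxeter element `C = (-L * U⁻¹)ᵀ` attached to a Cartan matrix of finite
type satisfies `I + C + C² + ⋯ + C^(h-1) = 0` (and hence `C^h = 1`) for some
positive integer h. -/
theorem coxeter_matrix_sum_eq_zero {r : ℕ} (hr : 1 ≤ r)
    (A : Matrix (Fin r) (Fin r) ℤ) (hA : IsGCM A)
    (hsym : IsSymmetrisable A) (hfin : IsFiniteType A) (hind : IsIndecomposable A)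
    (L U C : Matrix (Fin r) (Fin r) ℚ)
    (hL : ∀ i j, L i j = if i = j then 1 else if j < i then (A i j : ℚ) else 0)
    (hU : ∀ i j, U i j = if i = j then 1 else if i < j then (A i j : ℚ) else 0)
    (hC : C = (-(L * U⁻¹))ᵀ) :
    ∃ h : ℕ, 0 < h ∧ (∑ k ∈ Finset.range h, C ^ k = 0) ∧ C ^ h = 1 := by
  obtain ⟨d, hd, hdA⟩ := hsym
  have hd0 : ∀ i, (d i : ℚ) ≠ 0 := fun i => by exact_mod_cast (hd i).ne'
  -- integer versions of L, U
  set φ : Matrix (Fin r) (Fin r) ℤ →+* Matrix (Fin r) (Fin r) ℚ := (Int.castRingHom ℚ).mapMatrix with hφ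
  set L0 : Matrix (Fin r) (Fin r) ℤ :=
    Matrix.of (fun i j => if i = j then 1 else if j < i then A i j else 0) with hL0
  set U0 : Matrix (Fin r) (Fin r) ℤ :=
    Matrix.of (fun i j => if i = j then 1 else if i < j then A i j else 0) with hU0
  have hLmap : L = φ L0 := by
    ext i j
    rw [hL i j]
    simp only [hφ, RingHom.mapMatrix_apply, Matrix.map_apply, hL0, Matrix.of_apply]
    split_ifs <;> simp
  have hUmap : U = φ U0 := by
    ext i j
    rw [hU i j]
    simp only [hφ, RingHom.mapMatrix_apply, Matrix.map_apply, hU0, Matrix.of_apply]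
    split_ifs <;> simp
  -- determinants
  have hdetU0 : U0.det = 1 := by
    rw [Matrix.det_of_upperTriangular]
    · simp [hU0]
    · intro i j hij
      simp only [hU0, Matrix.of_apply, id] at *
      rw [if_neg (by omega : ¬ i = j), if_neg (by omega : ¬ i < j)]
  have hdetL0 : L0.det = 1 := by
    rw [Matrix.det_of_lowerTriangular]
    · simp [hL0]
    · intro i j hij
      simp only [hL0, Matrix.of_apply] at *
      rw [if_neg (by exact fun h => (by simp [h, lt_irrefl] at hij) : ¬ i = j),
        if_neg (by simpa using hij.le : ¬ j < i)]
  have hdetU : U.det = 1 := by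
    rw [hUmap, hφ, ← RingHom.map_det, hdetU0]
    exact (Int.castRingHom ℚ).map_one
  have hdetL : L.det = 1 := by
    rw [hLmap, hφ, ← RingHom.map_det, hdetL0]
    exact (Int.castRingHom ℚ).map_one
  have hUdet : IsUnit U.det := by rw [hdetU]; exact isUnit_one
  set V : Matrix (Fin r) (Fin r) ℚ := U⁻¹ with hV
  have hUV : U * V = 1 := Matrix.mul_nonsing_inv U hUdet
  have hVU : V * U = 1 := Matrix.nonsing_inv_mul U hUdet
  have hUVt : Uᵀ * Vᵀ = 1 := by rw [← Matrix.transpose_mul, hVU, Matrix.transpose_one]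
  have hVUt : Vᵀ * Uᵀ = 1 := by rw [← Matrix.transpose_mul, hUV, Matrix.transpose_one]
  -- the symmetrising diagonal matrix
  set E : Matrix (Fin r) (Fin r) ℚ := Matrix.diagonal (fun i => ((d i : ℚ))⁻¹) with hE
  -- the key entrywise identities L*E = E*Uᵀ and U*E = E*Lᵀ
  have hqd : ∀ i j, (A i j : ℚ) * (d j : ℚ)⁻¹ = (d i : ℚ)⁻¹ * (A j i : ℚ) := by
    intro i j
    have hq : (d i : ℚ) * (A i j : ℚ) = (d j : ℚ) * (A j i : ℚ) := by
      exact_mod_cast hdA i j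
    field_simp [hd0 i, hd0 j]
    linear_combination hq
  have key1 : L * E = E * Uᵀ := by
    ext i j
    rw [hE, Matrix.mul_diagonal, Matrix.diagonal_mul, Matrix.transpose_apply, hL i j, hU j i]
    rcases lt_trichotomy i j with h | h | h
    · rw [if_neg h.ne, if_neg (asymm h), if_neg h.ne', if_neg (asymm h)]
      simp
    · rw [if_pos h, if_pos h.symm, h]
      simp [mul_comm]
    · rw [if_neg h.ne', if_pos h, if_neg h.ne, if_pos h]
      exact hqd i j
  have key2 : U * E = E * Lᵀ := by
    ext i j
    rw [hE, Matrix.mul_diagonal, Matrix.diagonal_mul, Matrix.transpose_apply, hU i j, hL j i]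
    rcases lt_trichotomy i j with h | h | h
    · rw [if_neg h.ne, if_pos h, if_neg h.ne', if_pos h]
      exact hqd i j
    · rw [if_pos h, if_pos h.symm, h]
      simp [mul_comm]
    · rw [if_neg h.ne', if_neg (asymm h), if_neg h.ne, if_neg (asymm h)]
      simp
  -- the invariant form G
  set G : Matrix (Fin r) (Fin r) ℚ := (L + U) * E with hG
  have hEt : Eᵀ = E := by rw [hE, Matrix.diagonal_transpose]
  have hGsym : Gᵀ = G := by
    rw [hG, Matrix.transpose_mul, Matrix.transpose_add, hEt, Matrix.mul_add, ← key1, ← key2,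
      Matrix.add_mul]
    exact add_comm _ _
  -- entries of L+U are the (rational) entries of A
  have hLU : L + U = φ A := by
    ext i j
    simp only [Matrix.add_apply, hL i j, hU i j, hφ, RingHom.mapMatrix_apply,
      Matrix.map_apply]
    rcases lt_trichotomy i j with h | h | h
    · rw [if_neg h.ne, if_neg h.ne, if_neg (asymm h), if_pos h]
      simp
    · rw [if_pos h, if_pos h, h]
      rw [hA.1 j]
      norm_num
    · rw [if_neg h.ne', if_neg h.ne', if_pos h, if_neg (asymm h)]
      simp
  -- principal minors of G are positive
  have hGmin : ∀ I : Finset (Fin r), I.Nonempty →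
      0 < (G.submatrix ((↑) : I → Fin r) ((↑) : I → Fin r)).det := by
    intro I hI
    have hsub : G.submatrix ((↑) : I → Fin r) ((↑) : I → Fin r) =
        ((φ A).submatrix ((↑) : I → Fin r) ((↑) : I → Fin r)) *
          Matrix.diagonal (fun i : I => ((d i.1 : ℚ))⁻¹) := by
      ext i j
      rw [Matrix.mul_diagonal, Matrix.submatrix_apply, Matrix.submatrix_apply, hG, ← hLU,
        hE, Matrix.mul_diagonal]
    rw [hsub, Matrix.det_mul, Matrix.det_diagonal]
    have h1 : (φ A).submatrix ((↑) : I → Fin r) ((↑) : I → Fin r) =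
        (Int.castRingHom ℚ).mapMatrix (A.submatrix ((↑) : I → Fin r) ((↑) : I → Fin r)) := by
      ext i j
      simp [hφ, RingHom.mapMatrix_apply, Matrix.map_apply]
    rw [h1, ← RingHom.map_det]
    have h2 : (0 : ℚ) < ((A.submatrix ((↑) : I → Fin r) ((↑) : I → Fin r)).det : ℚ) := by
      exact_mod_cast hfin I hI
    have h3 : (0 : ℚ) < ∏ i : I, ((d i.1 : ℚ))⁻¹ :=
      Finset.prod_pos fun i _ => inv_pos.2 (by exact_mod_cast hd i.1)
    exact mul_pos h2 h3
  have hGpos : ∀ x : Fin r → ℚ, x ≠ 0 → 0 < x ⬝ᵥ (G *ᵥ x) :=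
    posdef_of_minors r G hGsym hGmin
  have hGnn : ∀ x : Fin r → ℚ, 0 ≤ x ⬝ᵥ (G *ᵥ x) := by
    intro x
    by_cases hx : x = 0
    · simp [hx]
    · exact (hGpos x hx).le
  -- helper identities
  have hLVU : L * V * U = L := by rw [Matrix.mul_assoc, hVU, Matrix.mul_one]
  have hstar : L * E * Vᵀ = E := by
    rw [key1, Matrix.mul_assoc, hUVt, Matrix.mul_one]
  have hstar2 : V * E * Lᵀ = E := by
    have h := congrArg (fun X => V * X) key2
    rw [← Matrix.mul_assoc, hVU, Matrix.one_mul] at h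
    rw [Matrix.mul_assoc, ← h]
  -- the invariance identity
  have hmain : (L * V) * G * (Vᵀ * Lᵀ) = G := by
    rw [hG]
    simp only [Matrix.mul_add, Matrix.add_mul, ← Matrix.mul_assoc]
    have t2 : L * V * U * E * Vᵀ * Lᵀ = U * E := by
      rw [hLVU, hstar, ← key2]
    have t1 : L * V * L * E * Vᵀ * Lᵀ = L * E := by
      rw [Matrix.mul_assoc (L * V) L E, key1]
      simp only [← Matrix.mul_assoc]
      rw [Matrix.mul_assoc (L * V * E) Uᵀ Vᵀ, hUVt, Matrix.mul_one,
        Matrix.mul_assoc L V E, Matrix.mul_assoc L (V * E) Lᵀ, hstar2]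
      exact key1
    rw [t1, t2]
  have hCt : Cᵀ = -(L * V) := by rw [hC, Matrix.transpose_transpose]
  have hCneg : C = -(Vᵀ * Lᵀ) := by rw [hC, Matrix.transpose_neg, Matrix.transpose_mul]
  have hCGC : Cᵀ * G * C = G := by
    rw [hCt, hCneg, Matrix.neg_mul, Matrix.neg_mul, Matrix.mul_neg, neg_neg]
    exact hmain
  have hpowinv : ∀ k : ℕ, (C ^ k)ᵀ * G * (C ^ k) = G := by
    intro k
    induction k with
    | zero => simp
    | succ k ihk =>
      rw [pow_succ, Matrix.transpose_mul]
      calc Cᵀ * (C ^ k)ᵀ * G * (C ^ k * C)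
          = Cᵀ * ((C ^ k)ᵀ * G * C ^ k) * C := by simp only [Matrix.mul_assoc]
        _ = Cᵀ * G * C := by rw [ihk]
        _ = G := hCGC
  -- integrality of C
  haveI hU0inv : Invertible U0 := U0.invertibleOfIsUnitDet (by rw [hdetU0]; exact isUnit_one)
  set V0 : Matrix (Fin r) (Fin r) ℤ := ⅟U0 with hV0
  have hUV0 : U0 * V0 = 1 := mul_invOf_self U0
  have hVmap : V = φ V0 := by
    rw [hV]
    apply Matrix.inv_eq_right_inv
    rw [hUmap, ← φ.map_mul, hUV0, φ.map_one]
  have hLV : L * V = φ (L0 * V0) := by rw [φ.map_mul, ← hLmap, ← hVmap]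
  set C0 : Matrix (Fin r) (Fin r) ℤ := (-(L0 * V0))ᵀ with hC0
  have hCmap : C = φ C0 := by
    ext i j
    rw [hC, hC0]
    show (-(L * V)) j i = ((Int.castRingHom ℚ).mapMatrix ((-(L0 * V0))ᵀ)) i j
    rw [RingHom.mapMatrix_apply, Matrix.map_apply, Matrix.transpose_apply,
      Matrix.neg_apply, Matrix.neg_apply, hLV]
    rw [hφ, RingHom.mapMatrix_apply, Matrix.map_apply]
    push_cast
    rfl
  have hpowmap : ∀ k : ℕ, C ^ k = φ (C0 ^ k) := fun k => by rw [hCmap, map_pow]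
  -- invertibility of G
  have hdetG : 0 < G.det := by
    have hne : Nonempty (Fin r) := ⟨⟨0, hr⟩⟩
    have := hGmin Finset.univ Finset.univ_nonempty
    rwa [det_submatrix_univ] at this
  haveI hGinv : Invertible G := G.invertibleOfIsUnitDet (isUnit_iff_ne_zero.2 hdetG.ne')
  have hGGinv : G * ⅟G = 1 := mul_invOf_self G
  -- the entries of the powers of C are bounded
  set u : Fin r → Fin r → ℚ := fun i => ⅟G *ᵥ Pi.single i 1 with hu
  set Q : Fin r → Fin r → ℚ := fun i j => (u i ⬝ᵥ (G *ᵥ u i)) * G j j with hQ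
  have hbound : ∀ (k : ℕ) (i j : Fin r), (((C0 ^ k) i j : ℚ)) ^ 2 ≤ Q i j := by
    intro k i j
    have hMij : ((C0 ^ k) i j : ℚ) = (C ^ k) i j := by
      rw [hpowmap k, hφ, RingHom.mapMatrix_apply, Matrix.map_apply]
      rfl
    set y : Fin r → ℚ := (C ^ k) *ᵥ Pi.single j 1 with hy
    have hyG : y ⬝ᵥ (G *ᵥ y) = G j j := by
      rw [hy, Matrix.mulVec_mulVec, mulVec_dot, Matrix.mulVec_mulVec, ← Matrix.mul_assoc,
        hpowinv k]
      simp [Matrix.mulVec_single, single_dotProduct]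
    have hMent : u i ⬝ᵥ (G *ᵥ y) = (C ^ k) i j := by
      rw [symm_dot hGsym]
      show y ⬝ᵥ (G *ᵥ (⅟G *ᵥ Pi.single i 1)) = (C ^ k) i j
      rw [Matrix.mulVec_mulVec, hGGinv, Matrix.one_mulVec, dotProduct_single, mul_one, hy]
      simp [Matrix.mulVec_single]
    calc ((C0 ^ k) i j : ℚ) ^ 2 = (u i ⬝ᵥ (G *ᵥ y)) ^ 2 := by rw [hMij, ← hMent]
      _ ≤ (u i ⬝ᵥ (G *ᵥ u i)) * (y ⬝ᵥ (G *ᵥ y)) := cs_ineq hGsym hGnn (u i) y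
      _ = Q i j := by rw [hyG, hQ]
  -- pigeonhole: C has finite order
  set P : Set (Fin r → Fin r → ℤ) :=
    Set.pi Set.univ (fun i => Set.pi Set.univ (fun j => {m : ℤ | (m : ℚ) ^ 2 ≤ Q i j})) with hP
  have hPfin : P.Finite :=
    Set.Finite.pi (fun i => Set.Finite.pi (fun j => sq_bound_finite (Q i j)))
  set g : ℕ → (Fin r → Fin r → ℤ) := fun k => fun i j => (C0 ^ k) i j with hg
  have hgmem : ∀ k, g k ∈ P := by
    intro k
    rw [hP]
    intro i _
    intro j _
    exact hbound k i j
  have hninj : ¬ Function.Injective g := by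
    intro hinj
    exact (Set.infinite_range_of_injective hinj) (hPfin.subset (Set.range_subset_iff.2 hgmem))
  obtain ⟨a, b, hgab, hne⟩ := Function.not_injective_iff.1 hninj
  have hC0ab : C0 ^ a = C0 ^ b := by
    ext i j
    exact congrFun (congrFun hgab i) j
  have hCab : C ^ a = C ^ b := by rw [hpowmap a, hpowmap b, hC0ab]
  -- C is invertible
  have hdetC : C.det = (-1) ^ r := by
    rw [hC, Matrix.det_transpose, Matrix.det_neg, Matrix.det_mul, hdetL,
      Matrix.det_nonsing_inv, hdetU]
    simp
  have hCunit : IsUnit C := (Matrix.isUnit_iff_isUnit_det C).2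
    (by rw [hdetC]; exact (isUnit_one.neg).pow r)
  have keyfin : ∀ a b : ℕ, a < b → C ^ a = C ^ b → ∃ h : ℕ, 0 < h ∧ C ^ h = 1 := by
    intro a b hab heq
    refine ⟨b - a, Nat.sub_pos_of_lt hab, ?_⟩
    have h1 : C ^ a * C ^ (b - a) = C ^ a * 1 := by
      rw [mul_one, ← pow_add, Nat.add_sub_cancel' hab.le, ← heq]
    exact (hCunit.pow a).mul_left_cancel h1
  obtain ⟨h, hhpos, hCh⟩ : ∃ h : ℕ, 0 < h ∧ C ^ h = 1 := by
    rcases hne.lt_or_gt with hlt | hlt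
    · exact keyfin a b hlt hCab
    · exact keyfin b a hlt hCab.symm
  -- C - 1 is invertible
  have hC1 : C - 1 = -(Vᵀ * (L + U)ᵀ) := by
    rw [hCneg, Matrix.transpose_add, Matrix.mul_add, hVUt]
    abel
  have hdetA : (0 : ℚ) < ((A.det : ℚ)) := by
    have hne : Nonempty (Fin r) := ⟨⟨0, hr⟩⟩
    have := hfin Finset.univ Finset.univ_nonempty
    rw [det_submatrix_univ] at this
    exact_mod_cast this
  have hdetC1 : (C - 1).det ≠ 0 := by
    rw [hC1, Matrix.det_neg, Matrix.det_mul, Matrix.det_transpose, Matrix.det_transpose, hLU,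
      hV, Matrix.det_nonsing_inv, hdetU]
    have hφdet : (φ A).det = (A.det : ℚ) := by
      rw [hφ, ← RingHom.map_det]
      rfl
    rw [hφdet, Ring.inverse_one]
    intro hcon
    rcases mul_eq_zero.1 hcon with hcon1 | hcon2
    · exact pow_ne_zero (Fintype.card (Fin r)) (by norm_num : (-1 : ℚ) ≠ 0) hcon1
    · rcases mul_eq_zero.1 hcon2 with hcon3 | hcon4
      · norm_num at hcon3
      · exact hdetA.ne' hcon4
  have hC1unit : IsUnit (C - 1).det := isUnit_iff_ne_zero.2 hdetC1
  have hgeom : (∑ k ∈ Finset.range h, C ^ k) * (C - 1) = 0 := by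
    rw [geom_sum_mul, hCh, sub_self]
  have hsum : (∑ k ∈ Finset.range h, C ^ k) = 0 := by
    have h2 : (C - 1) * (C - 1)⁻¹ = 1 := Matrix.mul_nonsing_inv _ hC1unit
    calc (∑ k ∈ Finset.range h, C ^ k)
        = (∑ k ∈ Finset.range h, C ^ k) * ((C - 1) * (C - 1)⁻¹) := by rw [h2, mul_one]
      _ = ((∑ k ∈ Finset.range h, C ^ k) * (C - 1)) * (C - 1)⁻¹ := by rw [mul_assoc]
      _ = 0 := by rw [hgeom, zero_mul]
  exact ⟨h, hhpos, hsum, hCh⟩
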